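/- arXiv:1008.1081 — 2 statements merged into one kernel-verified Lean document; each statement's English description precedes it below -/
import Mathlib

section
/- (Theorem 5.1, domain parametrization.) Let Ã ∈ M be closed, corresponding to T : V → W. Then D(Ã) = {v + A_γ^{-1}(T z + f) + z : v ∈ D(A_min), z ∈ D(T), f ∈ Z' ⊖ W}, where Z' ⊖ W denotes the orthogonal complement of W in Z'; moreover, for each u ∈ D(Ã) the elements v, z, f in this representation are uniquely determined by u. -/
noncomputable section

open Filter Topology

namespace GrubbExt

variable {H : Type*} [NormedAddCommGroup H] [InnerProductSpace ℂ H] [CompleteSpace H]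

/-- The inclusion of a closed subspace composed with the orthogonal projection onto it,
as a continuous linear map `H →L[ℂ] H`.  This is `i_K ∘ pr_K` in the notation of the paper. -/
def projCl (K : Submodule ℂ H) (hK : IsClosed (K : Set H)) : H →L[ℂ] H :=
  haveI : CompleteSpace K := hK.completeSpace_coe
  K.subtypeL.comp (K.orthogonalProjectionOnto)

/-- `R` is the (everywhere defined, bounded) inverse of `P - lam`. -/
structure IsResolvent (P : H →ₗ.[ℂ] H) (lam : ℂ) (R : H →L[ℂ] H) : Prop where
  mem : ∀ f : H, R f ∈ P.domain
  left : ∀ u : P.domain, R (P u - lam • (u : H)) = u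
  right : ∀ f : H, P ⟨R f, mem f⟩ - lam • R f = f

/-- `E^λ := I + λ(A_γ - λ)^{-1}`, given the resolvent `R = (A_γ - λ)^{-1}`. -/
def Eop (lam : ℂ) (R : H →L[ℂ] H) : H →L[ℂ] H := ContinuousLinearMap.id ℂ H + lam • R

/-- `E'^{λ̄} := I + λ̄(A_γ^* - λ̄)^{-1}`, given the resolvent `R' = (A_γ^* - λ̄)^{-1}`. -/
def Eop' (lam : ℂ) (R' : H →L[ℂ] H) : H →L[ℂ] H :=
  ContinuousLinearMap.id ℂ H + (starRingEnd ℂ lam) • R'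

/-- The resolvent set of a partially defined operator. -/
def resSet (P : H →ₗ.[ℂ] H) : Set ℂ := {lam | ∃ R : H →L[ℂ] H, IsResolvent P lam R}

/-- The set of "Rayleigh quotients" `Re⟨Pu,u⟩` over unit vectors `u` in the domain of `P`;
the lower bound `m(P)` is the infimum of this set. -/
def raySet (P : H →ₗ.[ℂ] H) : Set ℝ :=
  {r | ∃ u : P.domain, ‖(u : H)‖ = 1 ∧ r = (inner ℂ (P u) (u : H) : ℂ).re}

/-- The abstract set-up of Grubb's extension theory: a dual pair `A_min, A'_min` of closed
densely defined operators in a Hilbert space `H`, together with a reference operator `A_γ`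
lying between `A_min` and `A_max := (A'_min)*`, which is bijective with bounded inverse
(and whose adjoint is likewise bijective with bounded inverse). -/
structure Setup (H : Type*) [NormedAddCommGroup H] [InnerProductSpace ℂ H]
    [CompleteSpace H] where
  Amin : H →ₗ.[ℂ] H
  Amin' : H →ₗ.[ℂ] H
  closed_Amin : IsClosed (Amin.graph : Set (H × H))
  closed_Amin' : IsClosed (Amin'.graph : Set (H × H))
  dense_Amin : Dense (Amin.domain : Set H)
  dense_Amin' : Dense (Amin'.domain : Set H)
  Amin_le_max : Amin ≤ Amin'.adjoint
  Amin'_le_max' : Amin' ≤ Amin.adjoint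
  Agam : H →ₗ.[ℂ] H
  Amin_le_Agam : Amin ≤ Agam
  Agam_le_max : Agam ≤ Amin'.adjoint
  Agaminv : H →L[ℂ] H
  Agaminv_mem : ∀ f : H, Agaminv f ∈ Agam.domain
  Agaminv_left : ∀ u : Agam.domain, Agaminv (Agam u) = u
  Agaminv_right : ∀ f : H, Agam ⟨Agaminv f, Agaminv_mem f⟩ = f
  Agamstarinv : H →L[ℂ] H
  Agamstarinv_mem : ∀ f : H, Agamstarinv f ∈ Agam.adjoint.domain
  Agamstarinv_left : ∀ v : Agam.adjoint.domain, Agamstarinv (Agam.adjoint v) = v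
  Agamstarinv_right : ∀ f : H, Agam.adjoint ⟨Agamstarinv f, Agamstarinv_mem f⟩ = f

namespace Setup

variable (S : Setup H)

/-- `A_max := (A'_min)*`. -/
def Amax : H →ₗ.[ℂ] H := S.Amin'.adjoint

/-- `A'_max := (A_min)*`. -/
def Amax' : H →ₗ.[ℂ] H := S.Amin.adjoint

/-- `u_ζ := u - A_γ^{-1} A_max u`, the nullspace component of `u ∈ D(A_max)`. -/
def uzeta (u : S.Amax.domain) : H := (u : H) - S.Agaminv (S.Amax u)

/-- `v_{ζ'} := v - (A_γ^*)^{-1} A'_max v`, the nullspace component of `v ∈ D(A'_max)`. -/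
def vzeta (v : S.Amax'.domain) : H := (v : H) - S.Agamstarinv (S.Amax' v)

/-- `Z := ker A_max`, as a submodule of `H`. -/
def Zker : Submodule ℂ H := (LinearMap.ker S.Amax.toFun).map S.Amax.domain.subtype

/-- `Z' := ker A'_max`, as a submodule of `H`. -/
def Zker' : Submodule ℂ H := (LinearMap.ker S.Amax'.toFun).map S.Amax'.domain.subtype

lemma coe_Zker :
    (S.Zker : Set H) = ⋂ v : S.Amin'.domain, {y : H | (inner ℂ y (S.Amin' v) : ℂ) = 0} := by
  ext y
  simp only [Set.mem_iInter, Set.mem_setOf_eq, SetLike.mem_coe, Zker, Submodule.mem_map,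
    LinearMap.mem_ker]
  constructor
  · rintro ⟨u, hu, rfl⟩ v
    have h := (LinearPMap.adjoint_isFormalAdjoint S.dense_Amin') u v
    have hu' : S.Amin'.adjoint u = 0 := hu
    rw [hu'] at h
    simpa using h.symm
  · intro h
    have hmem : y ∈ S.Amax.domain := by
      refine LinearPMap.mem_adjoint_domain_of_exists _ ⟨0, fun x => ?_⟩
      simp [h x]
    refine ⟨⟨y, hmem⟩, ?_, rfl⟩
    exact LinearPMap.adjoint_apply_eq S.dense_Amin' ⟨y, hmem⟩ fun x => by simp [h x]

lemma isClosed_Zker : IsClosed (S.Zker : Set H) := by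
  rw [S.coe_Zker]
  exact isClosed_iInter fun v =>
    isClosed_eq (Continuous.inner continuous_id continuous_const) continuous_const

lemma coe_Zker' :
    (S.Zker' : Set H) = ⋂ v : S.Amin.domain, {y : H | (inner ℂ y (S.Amin v) : ℂ) = 0} := by
  ext y
  simp only [Set.mem_iInter, Set.mem_setOf_eq, SetLike.mem_coe, Zker', Submodule.mem_map,
    LinearMap.mem_ker]
  constructor
  · rintro ⟨u, hu, rfl⟩ v
    have h := (LinearPMap.adjoint_isFormalAdjoint S.dense_Amin) u v
    have hu' : S.Amin.adjoint u = 0 := hu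
    rw [hu'] at h
    simpa using h.symm
  · intro h
    have hmem : y ∈ S.Amax'.domain := by
      refine LinearPMap.mem_adjoint_domain_of_exists _ ⟨0, fun x => ?_⟩
      simp [h x]
    refine ⟨⟨y, hmem⟩, ?_, rfl⟩
    exact LinearPMap.adjoint_apply_eq S.dense_Amin ⟨y, hmem⟩ fun x => by simp [h x]

lemma isClosed_Zker' : IsClosed (S.Zker' : Set H) := by
  rw [S.coe_Zker']
  exact isClosed_iInter fun v =>
    isClosed_eq (Continuous.inner continuous_id continuous_const) continuous_const

/-- The orthogonal projection onto `Z = ker A_max`. -/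
def projZ : H →L[ℂ] H := projCl S.Zker S.isClosed_Zker

/-- The orthogonal projection onto `Z' = ker A'_max`. -/
def projZ' : H →L[ℂ] H := projCl S.Zker' S.isClosed_Zker'

variable (At : H →ₗ.[ℂ] H)

/-- `D(T) = {u_ζ : u ∈ D(Ã)}`, the set of nullspace components of elements of `D(Ã)`. -/
def dzeta : Set H := {x | ∃ u : S.Amax.domain, (u : H) ∈ At.domain ∧ x = S.uzeta u}

/-- `{v_{ζ'} : v ∈ D(Ã*)}`. -/
def dzeta' : Set H := {x | ∃ v : S.Amax'.domain, (v : H) ∈ At.adjoint.domain ∧ x = S.vzeta v}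

/-- `V := closure {u_ζ : u ∈ D(Ã)}`. -/
def Vsub : Submodule ℂ H := (Submodule.span ℂ (S.dzeta At)).topologicalClosure

/-- `W := closure {v_{ζ'} : v ∈ D(Ã*)}`. -/
def Wsub : Submodule ℂ H := (Submodule.span ℂ (S.dzeta' At)).topologicalClosure

lemma isClosed_Vsub : IsClosed ((S.Vsub At : Set H)) :=
  Submodule.isClosed_topologicalClosure _

lemma isClosed_Wsub : IsClosed ((S.Wsub At : Set H)) :=
  Submodule.isClosed_topologicalClosure _

/-- The orthogonal projection onto `V`. -/
def projV : H →L[ℂ] H := projCl (S.Vsub At) (S.isClosed_Vsub At)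

/-- The orthogonal projection onto `W`. -/
def projW : H →L[ℂ] H := projCl (S.Wsub At) (S.isClosed_Wsub At)

/-- The set `{(u_ζ, pr_W (A_max u)) : u ∈ D(Ã)}`, for a general closed subspace `W`. -/
def TgraphOn (W : Submodule ℂ H) (hW : IsClosed (W : Set H)) : Set (H × H) :=
  {p | ∃ u : S.Amax.domain, (u : H) ∈ At.domain ∧ p.1 = S.uzeta u ∧
    p.2 = projCl W hW (S.Amax u)}

/-- The graph of the operator `T : V → W` corresponding to `Ã`. -/
def Tgraph : Set (H × H) := S.TgraphOn At (S.Wsub At) (S.isClosed_Wsub At)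


/-- `F^λ := I - λ A_γ^{-1}`. -/
def Fop (lam : ℂ) : H →L[ℂ] H := ContinuousLinearMap.id ℂ H - lam • S.Agaminv

/-- `F'^{λ̄} := I - λ̄ (A_γ^*)^{-1}`. -/
def Fop' (lam : ℂ) : H →L[ℂ] H := ContinuousLinearMap.id ℂ H - (starRingEnd ℂ lam) • S.Agamstarinv

/-- `Z_λ := ker(A_max - λ)`, as a subset of `H`. -/
def ZkerL (lam : ℂ) : Set H :=
  {x | ∃ hx : x ∈ S.Amax.domain, S.Amax ⟨x, hx⟩ = lam • x}

/-- `Z'_{λ̄} := ker(A'_max - λ̄)`, as a subset of `H`. -/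
def ZkerL' (lam : ℂ) : Set H :=
  {x | ∃ hx : x ∈ S.Amax'.domain, S.Amax' ⟨x, hx⟩ = (starRingEnd ℂ lam) • x}

/-- `pr^λ_ζ u := u - (A_γ - λ)^{-1}(A_max - λ)u`, given the resolvent `R = (A_γ - λ)^{-1}`. -/
def uzetaL (lam : ℂ) (R : H →L[ℂ] H) (u : S.Amax.domain) : H :=
  (u : H) - R (S.Amax u - lam • (u : H))

/-- `pr^{λ̄}_{ζ'} v := v - (A_γ^* - λ̄)^{-1}(A'_max - λ̄)v`,
given the resolvent `R' = (A_γ^* - λ̄)^{-1}`. -/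
def vzetaL (lam : ℂ) (R' : H →L[ℂ] H) (v : S.Amax'.domain) : H :=
  (v : H) - R' (S.Amax' v - (starRingEnd ℂ lam) • (v : H))

/-- `D(T^λ) = {pr^λ_ζ u : u ∈ D(Ã)}`. -/
def dzetaL (lam : ℂ) (R : H →L[ℂ] H) : Set H :=
  {x | ∃ u : S.Amax.domain, (u : H) ∈ At.domain ∧ x = S.uzetaL lam R u}

/-- `{pr^{λ̄}_{ζ'} v : v ∈ D(Ã*)}`. -/
def dzetaL' (lam : ℂ) (R' : H →L[ℂ] H) : Set H :=
  {x | ∃ v : S.Amax'.domain, (v : H) ∈ At.adjoint.domain ∧ x = S.vzetaL lam R' v}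

/-- `V_λ := closure {pr^λ_ζ u : u ∈ D(Ã)}`. -/
def VLsub (lam : ℂ) (R : H →L[ℂ] H) : Submodule ℂ H :=
  (Submodule.span ℂ (S.dzetaL At lam R)).topologicalClosure

/-- `W_{λ̄} := closure {pr^{λ̄}_{ζ'} v : v ∈ D(Ã*)}`. -/
def WLsub (lam : ℂ) (R' : H →L[ℂ] H) : Submodule ℂ H :=
  (Submodule.span ℂ (S.dzetaL' At lam R')).topologicalClosure

lemma isClosed_WLsub (lam : ℂ) (R' : H →L[ℂ] H) : IsClosed ((S.WLsub At lam R' : Set H)) :=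
  Submodule.isClosed_topologicalClosure _

/-- The orthogonal projection onto `W_{λ̄}`. -/
def projWL (lam : ℂ) (R' : H →L[ℂ] H) : H →L[ℂ] H :=
  projCl (S.WLsub At lam R') (S.isClosed_WLsub At lam R')

/-- The graph of the operator `T^λ : V_λ → W_{λ̄}` corresponding to `Ã - λ`:
`{(pr^λ_ζ u, pr_{W_{λ̄}}((A_max - λ)u)) : u ∈ D(Ã)}`. -/
def TgraphL (lam : ℂ) (R R' : H →L[ℂ] H) : Set (H × H) :=
  {p | ∃ u : S.Amax.domain, (u : H) ∈ At.domain ∧ p.1 = S.uzetaL lam R u ∧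
    p.2 = S.projWL At lam R' (S.Amax u - lam • (u : H))}

/-- `G^λ_{V,W} x := -pr_W (λ E^λ x)`, where `W = W(Ã)`. -/
def Gval (lam : ℂ) (R : H →L[ℂ] H) (x : H) : H :=
  -(S.projW At (lam • Eop lam R x))

/-- `G^μ_{Z,Z} z := -pr_Z (μ E^μ z)`. -/
def GZval (lam : ℂ) (R : H →L[ℂ] H) (x : H) : H :=
  -(S.projZ (lam • Eop lam R x))

lemma mem_Amax_res {lam : ℂ} {Rt : H →L[ℂ] H} (h2 : At ≤ S.Amax)
    (hRt : IsResolvent At lam Rt) (w : H) :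
    S.Agaminv w - Rt (w - lam • S.Agaminv w) ∈ S.Amax.domain :=
  Submodule.sub_mem _ (S.Agam_le_max.1 (S.Agaminv_mem w)) (h2.1 (hRt.mem _))

/-- `M(λ) w := pr_ζ ((I - (Ã - λ)^{-1}(A_max - λ)) A_γ^{-1} w)`, the value of the abstract
`M`-function on `w`. -/
def Mval {lam : ℂ} {Rt : H →L[ℂ] H} (h2 : At ≤ S.Amax) (hRt : IsResolvent At lam Rt)
    (w : H) : H :=
  S.uzeta ⟨S.Agaminv w - Rt (w - lam • S.Agaminv w), S.mem_Amax_res At h2 hRt w⟩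

end Setup

section Aux

local notation "⟪" x ", " y "⟫" => @inner ℂ _ _ x y

/-- If `A ≤ B` then `B` agrees with `A` on `A.domain`. -/
lemma pmap_apply_of_le {A B : H →ₗ.[ℂ] H} (h : A ≤ B) (x : A.domain) :
    B ⟨(x : H), h.1 x.2⟩ = A x := (h.2 rfl).symm

/-- If `A ≤ B` then `B` agrees with `A` on `A.domain` (membership form). -/
lemma pmap_apply_of_le' {A B : H →ₗ.[ℂ] H} (h : A ≤ B) {x : H} (hx : x ∈ A.domain)
    (hx' : x ∈ B.domain) : B ⟨x, hx'⟩ = A ⟨x, hx⟩ :=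
  (h.2 (rfl : ((⟨x, hx⟩ : A.domain) : H) = ((⟨x, hx'⟩ : B.domain) : H))).symm

/-- The adjoint is antitone. -/
lemma pmap_adjoint_le_adjoint {A B : H →ₗ.[ℂ] H} (hA : Dense (A.domain : Set H))
    (hB : Dense (B.domain : Set H)) (h : A ≤ B) : B.adjoint ≤ A.adjoint := by
  have hfa : A.IsFormalAdjoint B.adjoint := by
    intro x y
    have h1 := (LinearPMap.adjoint_isFormalAdjoint hB) y ⟨(x : H), h.1 x.2⟩
    rw [← h.2 (rfl : ((x : A.domain) : H) = ((⟨(x : H), h.1 x.2⟩ : B.domain) : H))] at h1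
    rw [← inner_conj_symm, ← h1, inner_conj_symm]
  exact LinearPMap.IsFormalAdjoint.le_adjoint hA hfa

/-- Membership in the closed graph from the adjoint pairing property. -/
lemma mem_graph_of_adjoint_pairing {At : H →ₗ.[ℂ] H}
    (hcl : IsClosed (At.graph : Set (H × H))) (hd : Dense (At.domain : Set H)) (x w : H)
    (h : ∀ v : At.adjoint.domain, ⟪w, (v : H)⟫ = ⟪x, At.adjoint v⟫) :
    (x, w) ∈ At.graph := by
  set e : WithLp 2 (H × H) ≃L[ℂ] H × H := WithLp.prodContinuousLinearEquiv 2 ℂ H H with he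
  set G : Submodule ℂ (WithLp 2 (H × H)) :=
    At.graph.comap (e.toLinearEquiv : WithLp 2 (H × H) ≃ₗ[ℂ] H × H).toLinearMap with hG
  have hGc : IsClosed (G : Set (WithLp 2 (H × H))) := hcl.preimage e.continuous
  haveI : CompleteSpace G := hGc.completeSpace_coe
  set p : WithLp 2 (H × H) := (WithLp.equiv 2 (H × H)).symm (x, w) with hp
  have hpmem : p ∈ Gᗮᗮ := by
    rw [Submodule.mem_orthogonal]
    intro q hq
    set a : H := q.fst with ha
    set b : H := q.snd with hb
    have hbw : ∀ u : At.domain, ⟪(-a : H), (u : H)⟫ = ⟪b, At u⟫ := by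
      intro u
      have hu : ((WithLp.equiv 2 (H × H)).symm ((u : H), At u)) ∈ G := At.mem_graph u
      have h0 := (Submodule.mem_orthogonal _ _).mp hq _ hu
      rw [WithLp.prod_inner_apply] at h0
      have h0' : ⟪(u : H), a⟫ + ⟪At u, b⟫ = 0 := h0
      have : ⟪At u, b⟫ = ⟪(u : H), -a⟫ := by
        rw [inner_neg_right]; linear_combination h0'
      rw [← inner_conj_symm, ← this, inner_conj_symm]
    have hbd : b ∈ At.adjoint.domain := LinearPMap.mem_adjoint_domain_of_exists _ ⟨-a, hbw⟩
    have hab : At.adjoint ⟨b, hbd⟩ = -a := LinearPMap.adjoint_apply_eq hd _ hbw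
    have h2 := h ⟨b, hbd⟩
    rw [hab, inner_neg_right] at h2
    have hqp : ⟪q, p⟫ = ⟪a, x⟫ + ⟪b, w⟫ := WithLp.prod_inner_apply q p
    rw [hqp]
    have : ⟪b, w⟫ = -⟪a, x⟫ := by
      rw [← inner_conj_symm, h2, ← inner_conj_symm x a]
      simp [map_neg]
    rw [this]; ring
  rw [Submodule.orthogonal_orthogonal] at hpmem
  exact hpmem

namespace Setup

variable (S : Setup H)

lemma dense_Agam : Dense (S.Agam.domain : Set H) :=
  S.dense_Amin.mono fun _ hx => S.Amin_le_Agam.1 hx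

lemma Agaminv_Amin {v : H} (hv : v ∈ S.Amin.domain) :
    S.Agaminv (S.Amin ⟨v, hv⟩) = v := by
  rw [← pmap_apply_of_le' S.Amin_le_Agam hv (S.Amin_le_Agam.1 hv)]
  exact S.Agaminv_left _

/-- Green-type formula. -/
lemma green (u : S.Amax.domain) (v : S.Amax'.domain) :
    ⟪S.Amax u, (v : H)⟫ - ⟪(u : H), S.Amax' v⟫
      = ⟪S.Amax u, S.vzeta v⟫ - ⟪S.uzeta u, S.Amax' v⟫ := by
  have key : ⟪S.Amax u, S.Agamstarinv (S.Amax' v)⟫ = ⟪S.Agaminv (S.Amax u), S.Amax' v⟫ := by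
    have h1 := (LinearPMap.adjoint_isFormalAdjoint S.dense_Agam)
      ⟨S.Agamstarinv (S.Amax' v), S.Agamstarinv_mem _⟩
      ⟨S.Agaminv (S.Amax u), S.Agaminv_mem _⟩
    rw [S.Agamstarinv_right, S.Agaminv_right] at h1
    rw [← inner_conj_symm, ← h1, inner_conj_symm]
  simp only [uzeta, vzeta, inner_sub_left, inner_sub_right]
  rw [key]; ring

lemma uzeta_graph (u : S.Amax.domain) : (S.uzeta u, (0 : H)) ∈ S.Amax.graph := by
  have h1 : ((u : H), S.Amax u) ∈ S.Amax.graph := S.Amax.mem_graph u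
  have h2 : (S.Agaminv (S.Amax u), S.Amax u) ∈ S.Amax.graph := by
    have h3 := S.Amax.mem_graph ⟨S.Agaminv (S.Amax u), S.Agam_le_max.1 (S.Agaminv_mem _)⟩
    rwa [show S.Amax ⟨S.Agaminv (S.Amax u), S.Agam_le_max.1 (S.Agaminv_mem _)⟩ = S.Amax u from
      by rw [pmap_apply_of_le' (B := S.Amax) S.Agam_le_max (S.Agaminv_mem _) (S.Agam_le_max.1
        (S.Agaminv_mem _)), S.Agaminv_right]] at h3
  have := S.Amax.graph.sub_mem h1 h2
  simpa [uzeta, Prod.ext_iff] using this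

lemma Agamstarinv_Amin' : S.Agam.adjoint ≤ S.Amax' :=
  pmap_adjoint_le_adjoint S.dense_Amin S.dense_Agam S.Amin_le_Agam

lemma vzeta_graph (v : S.Amax'.domain) : (S.vzeta v, (0 : H)) ∈ S.Amax'.graph := by
  have h1 : ((v : H), S.Amax' v) ∈ S.Amax'.graph := S.Amax'.mem_graph v
  have h2 : (S.Agamstarinv (S.Amax' v), S.Amax' v) ∈ S.Amax'.graph := by
    have h3 := S.Amax'.mem_graph
      ⟨S.Agamstarinv (S.Amax' v), S.Agamstarinv_Amin'.1 (S.Agamstarinv_mem _)⟩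
    rwa [show S.Amax' ⟨S.Agamstarinv (S.Amax' v), S.Agamstarinv_Amin'.1 (S.Agamstarinv_mem _)⟩
        = S.Amax' v from
      by rw [pmap_apply_of_le' S.Agamstarinv_Amin' (S.Agamstarinv_mem _)
        (S.Agamstarinv_Amin'.1 (S.Agamstarinv_mem _)), S.Agamstarinv_right]] at h3
  have := S.Amax'.graph.sub_mem h1 h2
  simpa [vzeta, Prod.ext_iff] using this

lemma vzeta_mem_Zker' (v : S.Amax'.domain) : S.vzeta v ∈ S.Zker' := by
  obtain ⟨x', hx', hval⟩ := S.Amax'.mem_graph_iff.mp (S.vzeta_graph v)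
  exact ⟨x', hval, hx'⟩

lemma Zker'_eq_orthogonal : S.Zker' = (LinearMap.range S.Amin.toFun)ᗮ := by
  ext y
  have hy : y ∈ S.Zker' ↔ ∀ v : S.Amin.domain, ⟪y, S.Amin v⟫ = 0 := by
    constructor
    · intro h v
      have h2 : y ∈ (⋂ v : S.Amin.domain, {y : H | ⟪y, S.Amin v⟫ = 0}) := by
        rw [← S.coe_Zker']; exact h
      exact Set.mem_iInter.mp h2 v
    · intro h
      have : y ∈ (S.Zker' : Set H) := by
        rw [S.coe_Zker']; exact Set.mem_iInter.mpr fun v => h v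
      exact this
  rw [hy, Submodule.mem_orthogonal]
  constructor
  · rintro h u ⟨v, rfl⟩
    exact inner_eq_zero_symm.mpr (h v)
  · intro h v
    exact inner_eq_zero_symm.mpr (h _ ⟨v, rfl⟩)

lemma mem_Amin_graph_of_closure {g : H}
    (hg : g ∈ (LinearMap.range S.Amin.toFun).topologicalClosure) :
    (S.Agaminv g, g) ∈ S.Amin.graph := by
  set φ : H → H × H := fun w => (S.Agaminv w, w) with hφdef
  have hφ : Continuous φ := S.Agaminv.continuous.prodMk continuous_id
  have hsub : φ '' ((LinearMap.range S.Amin.toFun : Submodule ℂ H) : Set H)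
      ⊆ (S.Amin.graph : Set (H × H)) := by
    rintro _ ⟨w, ⟨v, rfl⟩, rfl⟩
    have h1 : S.Agaminv (S.Amin v) = (v : H) := S.Agaminv_Amin v.2
    have h2 : ((v : H), S.Amin v) ∈ S.Amin.graph := S.Amin.mem_graph v
    simpa [hφdef, h1] using h2
  have hgc : g ∈ closure ((LinearMap.range S.Amin.toFun : Submodule ℂ H) : Set H) := hg
  have := (image_closure_subset_closure_image hφ) ⟨g, hgc, rfl⟩
  have h4 : φ g ∈ closure (S.Amin.graph : Set (H × H)) :=
    closure_mono hsub this
  rwa [S.closed_Amin.closure_eq] at h4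

variable (At : H →ₗ.[ℂ] H)

lemma Wsub_le_Zker' : S.Wsub At ≤ S.Zker' := by
  refine Submodule.topologicalClosure_minimal _ ?_ S.isClosed_Zker'
  rw [Submodule.span_le]
  rintro _ ⟨v, _, rfl⟩
  exact S.vzeta_mem_Zker' v

lemma vzeta_mem_Wsub {v : S.Amax'.domain} (hv : (v : H) ∈ At.adjoint.domain) :
    S.vzeta v ∈ S.Wsub At :=
  Submodule.le_topologicalClosure _ (Submodule.subset_span ⟨v, hv, rfl⟩)

end Setup

lemma projCl_mem (K : Submodule ℂ H) (hK : IsClosed (K : Set H)) (w : H) :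
    projCl K hK w ∈ K := by
  haveI : CompleteSpace K := hK.completeSpace_coe
  exact (K.orthogonalProjectionOnto w).2

lemma projCl_inner_left (K : Submodule ℂ H) (hK : IsClosed (K : Set H)) (w t : H)
    (ht : t ∈ K) : ⟪t, projCl K hK w⟫ = ⟪t, w⟫ := by
  haveI : CompleteSpace K := hK.completeSpace_coe
  have h := K.sub_starProjection_mem_orthogonal w
  have h0 : ⟪t, w - projCl K hK w⟫ = 0 := h t ht
  rw [inner_sub_right] at h0
  linear_combination -h0

lemma projCl_inner_right (K : Submodule ℂ H) (hK : IsClosed (K : Set H)) (w t : H)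
    (ht : t ∈ K) : ⟪projCl K hK w, t⟫ = ⟪w, t⟫ := by
  rw [← inner_conj_symm, projCl_inner_left K hK w t ht, inner_conj_symm]

namespace Setup

variable (S : Setup H) (At : H →ₗ.[ℂ] H)

/-- Key computation: any element of the claimed form lies in `D(A_max)` with prescribed
`A_max`-value and `ζ`-component. -/
lemma decomp_graph {T : H →ₗ.[ℂ] H} (hT : (T.graph : Set (H × H)) = S.Tgraph At)
    {x v z y f : H} (hv : v ∈ S.Amin.domain) (hzy : (z, y) ∈ T.graph)
    (hx : x = v + S.Agaminv (y + f) + z) :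
    ∃ hxm : x ∈ S.Amax.domain,
      S.Amax ⟨x, hxm⟩ = S.Amin ⟨v, hv⟩ + y + f ∧ S.uzeta ⟨x, hxm⟩ = z := by
  have hzy' : (z, y) ∈ S.Tgraph At := by rw [← hT]; exact hzy
  obtain ⟨u, hu, hz1, hy1⟩ := hzy'
  have hz : z = S.uzeta u := hz1
  have hy : y = projCl (S.Wsub At) (S.isClosed_Wsub At) (S.Amax u) := hy1
  have hz0 : (z, (0 : H)) ∈ S.Amax.graph := by rw [hz]; exact S.uzeta_graph u
  have hv0 : (v, S.Amin ⟨v, hv⟩) ∈ S.Amax.graph :=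
    LinearPMap.le_graph_of_le S.Amin_le_max (S.Amin.mem_graph ⟨v, hv⟩)
  have hyf : (S.Agaminv (y + f), y + f) ∈ S.Amax.graph := by
    have h3 := S.Amax.mem_graph ⟨S.Agaminv (y + f), S.Agam_le_max.1 (S.Agaminv_mem _)⟩
    rwa [show S.Amax ⟨S.Agaminv (y + f), S.Agam_le_max.1 (S.Agaminv_mem _)⟩ = y + f from
      by rw [pmap_apply_of_le' (B := S.Amax) S.Agam_le_max (S.Agaminv_mem _) (S.Agam_le_max.1
        (S.Agaminv_mem _)), S.Agaminv_right]] at h3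
  have hsum := S.Amax.graph.add_mem (S.Amax.graph.add_mem hv0 hyf) hz0
  have hsum' : (x, S.Amin ⟨v, hv⟩ + y + f) ∈ S.Amax.graph := by
    have e1 : ((v, S.Amin ⟨v, hv⟩) + (S.Agaminv (y + f), y + f) + (z, (0 : H)) : H × H)
        = (x, S.Amin ⟨v, hv⟩ + y + f) := by
      simp only [Prod.mk_add_mk, Prod.mk.injEq]
      exact ⟨by rw [hx], by abel⟩
    rw [← e1]; exact hsum
  obtain ⟨x', hx', hval⟩ := S.Amax.mem_graph_iff.mp hsum'
  have hx'' : (x' : H) = x := hx'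
  have hval' : S.Amax x' = S.Amin ⟨v, hv⟩ + y + f := hval
  have hxm : x ∈ S.Amax.domain := hx'' ▸ x'.2
  have hxx : (⟨x, hxm⟩ : S.Amax.domain) = x' := Subtype.ext hx''.symm
  have hAval : S.Amax ⟨x, hxm⟩ = S.Amin ⟨v, hv⟩ + y + f := by rw [hxx, hval']
  refine ⟨hxm, hAval, ?_⟩
  have : S.uzeta ⟨x, hxm⟩ = x - S.Agaminv (S.Amin ⟨v, hv⟩ + y + f) := by
    rw [uzeta, hAval]
  rw [this, hx, hz]
  simp only [map_add, S.Agaminv_Amin hv]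
  abel

end Setup

end Aux

theorem statement_8 (S : Setup H) (At : H →ₗ.[ℂ] H)
    (h1 : S.Amin ≤ At) (h2 : At ≤ S.Amax)
    (hcl : IsClosed (At.graph : Set (H × H)))
    (T : H →ₗ.[ℂ] H) (hT : (T.graph : Set (H × H)) = S.Tgraph At) :
    ∀ x : H,
      (x ∈ At.domain ↔ ∃ v z y f : H, v ∈ S.Amin.domain ∧ (z, y) ∈ T.graph ∧
          f ∈ S.Zker' ⊓ (S.Wsub At)ᗮ ∧ x = v + S.Agaminv (y + f) + z) ∧
      (∀ v z y f v' z' y' f' : H, v ∈ S.Amin.domain → (z, y) ∈ T.graph →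
        f ∈ S.Zker' ⊓ (S.Wsub At)ᗮ →
        v' ∈ S.Amin.domain → (z', y') ∈ T.graph →
        f' ∈ S.Zker' ⊓ (S.Wsub At)ᗮ →
        v + S.Agaminv (y + f) + z = v' + S.Agaminv (y' + f') + z' →
        v = v' ∧ z = z' ∧ f = f') := by
  have hdense : Dense (At.domain : Set H) := S.dense_Amin.mono fun _ hx => h1.1 hx
  have hadle : At.adjoint ≤ S.Amax' :=
    pmap_adjoint_le_adjoint S.dense_Amin hdense h1
  haveI : CompleteSpace S.Zker' := S.isClosed_Zker'.completeSpace_coe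
  intro x
  constructor
  · constructor
    · -- forward direction
      intro hx
      set u : S.Amax.domain := ⟨x, h2.1 hx⟩ with hudef
      set w : H := S.Amax u with hwdef
      set y : H := projCl (S.Wsub At) (S.isClosed_Wsub At) w with hydef
      set q : H := projCl S.Zker' S.isClosed_Zker' w with hqdef
      have hg : w - q ∈ (LinearMap.range S.Amin.toFun).topologicalClosure := by
        rw [← Submodule.orthogonal_orthogonal_eq_closure, ← S.Zker'_eq_orthogonal]
        exact S.Zker'.sub_starProjection_mem_orthogonal w
      have hgr := S.mem_Amin_graph_of_closure hg
      refine ⟨S.Agaminv (w - q), S.uzeta u, y, q - y,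
        LinearPMap.mem_domain_of_mem_graph hgr, ?_, ?_, ?_⟩
      · have hmem : (S.uzeta u, y) ∈ S.Tgraph At := ⟨u, hx, rfl, rfl⟩
        rw [← hT] at hmem
        exact hmem
      · rw [Submodule.mem_inf]
        constructor
        · exact Submodule.sub_mem _ (projCl_mem _ _ w)
            (S.Wsub_le_Zker' At (projCl_mem _ _ w))
        · rw [Submodule.mem_orthogonal]
          intro t ht
          have h1t : inner ℂ t q = (inner ℂ t w : ℂ) :=
            projCl_inner_left _ _ w t (S.Wsub_le_Zker' At ht)
          have h2t : inner ℂ t y = (inner ℂ t w : ℂ) := projCl_inner_left _ _ w t ht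
          rw [inner_sub_right, h1t, h2t, sub_self]
      · have hqy : y + (q - y) = q := by abel
        rw [hqy]
        have hsum : S.Agaminv (w - q) + S.Agaminv q = S.Agaminv w := by
          rw [← map_add]; congr 1; abel
        have hz : S.uzeta u = x - S.Agaminv w := rfl
        rw [hz, hsum]
        abel
    · -- backward direction
      rintro ⟨v, z, y, f, hv, hzy, hf, hxeq⟩
      obtain ⟨hxm, hAval, huz⟩ := S.decomp_graph At hT hv hzy hxeq
      have hzy2 : (z, y) ∈ S.Tgraph At := by rw [← hT]; exact hzy
      obtain ⟨u, hu, hz1, hy1⟩ := hzy2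
      have hz : z = S.uzeta u := hz1
      have hy : y = projCl (S.Wsub At) (S.isClosed_Wsub At) (S.Amax u) := hy1
      have hpair : ∀ v' : At.adjoint.domain,
          (inner ℂ (S.Amin ⟨v, hv⟩ + y + f : H) (v' : H) : ℂ)
            = inner ℂ x (At.adjoint v') := by
        intro v'
        have hV'mem : (v' : H) ∈ S.Amax'.domain := hadle.1 v'.2
        set V' : S.Amax'.domain := ⟨(v' : H), hV'mem⟩ with hV'def
        have hAtadj : At.adjoint v' = S.Amax' V' := hadle.2 rfl
        have hcoe : (V' : H) = (v' : H) := rfl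
        have hWv : S.vzeta V' ∈ S.Wsub At := S.vzeta_mem_Wsub At v'.2
        have hZv : S.vzeta V' ∈ S.Zker' := S.vzeta_mem_Zker' V'
        have hgreenX := S.green ⟨x, hxm⟩ V'
        have hgreenU := S.green u V'
        have hAtu : S.Amax u = At ⟨(u : H), hu⟩ := pmap_apply_of_le' h2 hu u.2
        have hForm := (LinearPMap.adjoint_isFormalAdjoint hdense) v' ⟨(u : H), hu⟩
        have hU : (inner ℂ (S.Amax u) (V' : H) : ℂ) = inner ℂ (u : H) (S.Amax' V') := by
          rw [hcoe, ← hAtadj, hAtu]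
          rw [← inner_conj_symm, ← hForm, inner_conj_symm]
        have hUz : (inner ℂ (S.Amax u) (S.vzeta V') : ℂ)
            = inner ℂ (S.uzeta u) (S.Amax' V') := by
          linear_combination hU - hgreenU
        have hyW : (inner ℂ y (S.vzeta V') : ℂ) = inner ℂ (S.Amax u) (S.vzeta V') := by
          rw [hy]; exact projCl_inner_right _ _ _ _ hWv
        have hfW : (inner ℂ f (S.vzeta V') : ℂ) = 0 := by
          have hforth := (Submodule.mem_inf.mp hf).2
          exact inner_eq_zero_symm.mpr
            ((Submodule.mem_orthogonal _ f).mp hforth _ hWv)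
        have hAminW : (inner ℂ (S.Amin ⟨v, hv⟩ : H) (S.vzeta V') : ℂ) = 0 := by
          have hz' : S.vzeta V' ∈ (LinearMap.range S.Amin.toFun)ᗮ := by
            rw [← S.Zker'_eq_orthogonal]; exact hZv
          exact (Submodule.mem_orthogonal _ _).mp hz' _ ⟨⟨v, hv⟩, rfl⟩
        rw [hAval, huz, hz] at hgreenX
        have hXcoe : ((⟨x, hxm⟩ : S.Amax.domain) : H) = x := rfl
        rw [hXcoe] at hgreenX
        rw [hAtadj, ← hcoe]
        simp only [inner_add_left] at hgreenX ⊢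
        linear_combination hgreenX + hAminW + hyW + hfW + hUz
      have hgmem : (x, S.Amin ⟨v, hv⟩ + y + f) ∈ At.graph :=
        mem_graph_of_adjoint_pairing hcl hdense x _ hpair
      exact LinearPMap.mem_domain_of_mem_graph hgmem
  · -- uniqueness
    intro v z y f v' z' y' f' hv hzy hf hv' hzy' hf' heq
    obtain ⟨hxm, hA1, hu1⟩ := S.decomp_graph At hT hv hzy rfl
    obtain ⟨hxm2, hA2, hu2⟩ := S.decomp_graph At hT hv' hzy' heq
    have hzz : z = z' := by
      rw [← hu1]; exact hu2
    have hAA : S.Amin ⟨v, hv⟩ + y + f = S.Amin ⟨v', hv'⟩ + y' + f' := by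
      rw [← hA1]; exact hA2
    have hyy : y = y' := T.mem_graph_snd_inj hzy hzy' hzz
    rw [hyy] at hAA
    set vv : S.Amin.domain := ⟨v, hv⟩ with hvvdef
    set vv' : S.Amin.domain := ⟨v', hv'⟩ with hvv'def
    have h7 : S.Amin vv + f = S.Amin vv' + f' := by
      have h7' : (S.Amin vv + f) + y' = (S.Amin vv' + f') + y' := by
        rw [show (S.Amin vv + f) + y' = S.Amin vv + y' + f from by abel,
          show (S.Amin vv' + f') + y' = S.Amin vv' + y' + f' from by abel]
        exact hAA
      exact add_right_cancel h7'
    have h5 : S.Amin vv - S.Amin vv' = f' - f := by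
      rw [sub_eq_sub_iff_add_eq_add]
      exact h7.trans (add_comm _ _)
    have hrange : S.Amin vv - S.Amin vv' ∈ LinearMap.range S.Amin.toFun :=
      ⟨vv - vv', S.Amin.map_sub vv vv'⟩
    have horth : S.Amin vv - S.Amin vv' ∈ (LinearMap.range S.Amin.toFun)ᗮ := by
      rw [← S.Zker'_eq_orthogonal, h5]
      exact Submodule.sub_mem _ (Submodule.mem_inf.mp hf').1 (Submodule.mem_inf.mp hf).1
    have hzero : S.Amin vv - S.Amin vv' = 0 := by
      have hss := (Submodule.mem_orthogonal _ _).mp horth _ hrange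
      exact inner_self_eq_zero.mp hss
    have hff : f = f' := by
      rw [hzero] at h5
      exact (sub_eq_zero.mp h5.symm).symm
    have h8 : ((vv - vv' : S.Amin.domain) : H) = 0 := by
      have h9 := S.Agaminv_Amin (vv - vv').2
      have h10 : S.Amin ⟨((vv - vv' : S.Amin.domain) : H), (vv - vv').2⟩ = 0 := by
        have h11 : S.Amin (vv - vv') = 0 := by
          rw [S.Amin.map_sub]; exact hzero
        exact h11
      rw [h10, map_zero] at h9
      exact h9.symm
    have hvv : v = v' := by
      have h12 : (vv : H) - (vv' : H) = 0 := by
        rw [← Submodule.coe_sub]; exact h8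
      exact sub_eq_zero.mp h12
    exact ⟨hvv, hzz, hff⟩

end GrubbExt
end
end

section
/- (Corollary 5.2, Kreĭn-type resolvent formula.) Let Ã ∈ M be closed and let λ ∈ ρ(Ã) ∩ ρ(A_γ), where ρ(Ã) := {λ ∈ ℂ : Ã − λ : D(Ã) → H is bijective with bounded inverse}. Then T^λ : D(T^λ) → W_{λ̄} is bijective and (Ã − λ)^{-1} = (A_γ − λ)^{-1} + i_{V_λ} ∘ (T^λ)^{-1} ∘ pr_{W_{λ̄}} as operators on H. -/
noncomputable section

open Filter Topology

namespace GrubbExt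

variable {H : Type*} [NormedAddCommGroup H] [InnerProductSpace ℂ H] [CompleteSpace H]

section Aux

variable {H : Type*} [NormedAddCommGroup H] [InnerProductSpace ℂ H] [CompleteSpace H]

lemma projCl_apply_mem (K : Submodule ℂ H) (hK : IsClosed (K : Set H)) {x : H} (hx : x ∈ K) :
    projCl K hK x = x := by
  haveI : CompleteSpace K := hK.completeSpace_coe
  exact K.starProjection_eq_self_iff.mpr hx

lemma sub_projCl_mem_orthogonal (K : Submodule ℂ H) (hK : IsClosed (K : Set H)) (x : H) :
    x - projCl K hK x ∈ Kᗮ := by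
  haveI : CompleteSpace K := hK.completeSpace_coe
  exact K.sub_starProjection_mem_orthogonal x

/-- The Hilbert adjoint of the resolvent of `P` at `lam` lands in the domain of `P†`
and is, after correction, the resolvent of `P†` at `conj lam`. -/
lemma resolvent_adjoint {P : H →ₗ.[ℂ] H} (hP : Dense (P.domain : Set H))
    {lam : ℂ} {R : H →L[ℂ] H} (hR : IsResolvent P lam R) (g : H) :
    ∃ hm : (ContinuousLinearMap.adjoint R) g ∈ P.adjoint.domain,
      P.adjoint ⟨(ContinuousLinearMap.adjoint R) g, hm⟩
        = g + (starRingEnd ℂ lam) • (ContinuousLinearMap.adjoint R) g := by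
  set y := (ContinuousLinearMap.adjoint R) g with hy
  have key : ∀ x : P.domain,
      (inner ℂ (g + (starRingEnd ℂ lam) • y) (x : H) : ℂ) = inner ℂ y (P x) := by
    intro x
    have h1 : (inner ℂ y (P x - lam • (x : H)) : ℂ) = inner ℂ g (x : H) := by
      rw [hy, ContinuousLinearMap.adjoint_inner_left, hR.left]
    have h2 : (inner ℂ y (P x) : ℂ)
        = inner ℂ y (P x - lam • (x : H)) + lam * inner ℂ y (x : H) := by
      rw [inner_sub_right, inner_smul_right]; ring
    rw [h2, h1, inner_add_left, inner_smul_left]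
    simp
  exact ⟨LinearPMap.mem_adjoint_domain_of_exists _ ⟨_, key⟩,
    LinearPMap.adjoint_apply_eq hP _ key⟩

/-- Taking adjoints is antitone on densely defined operators. -/
lemma adjoint_anti {P Q : H →ₗ.[ℂ] H} (hP : Dense (P.domain : Set H))
    (hQ : Dense (Q.domain : Set H)) (h : P ≤ Q) : Q.adjoint ≤ P.adjoint := by
  refine LinearPMap.IsFormalAdjoint.le_adjoint hP ?_
  intro x y
  have hfa := LinearPMap.adjoint_isFormalAdjoint hQ y ⟨(x : H), h.1 x.2⟩
  have hval : Q ⟨(x : H), h.1 x.2⟩ = P x := (h.2 rfl).symm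
  rw [hval] at hfa
  calc (inner ℂ (P x) ((y : H)) : ℂ)
      = starRingEnd ℂ (inner ℂ ((y : H)) (P x)) := (inner_conj_symm _ _).symm
    _ = starRingEnd ℂ (inner ℂ ((Q.adjoint y : H)) ((x : H))) := by rw [hfa]
    _ = inner ℂ ((x : H)) ((Q.adjoint y : H)) := inner_conj_symm _ _

end Aux

theorem statement_10 (S : Setup H) (At : H →ₗ.[ℂ] H)
    (h1 : S.Amin ≤ At) (h2 : At ≤ S.Amax)
    (hcl : IsClosed (At.graph : Set (H × H)))
    (lam : ℂ) (Rg RAt R' : H →L[ℂ] H)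
    (hRg : IsResolvent S.Agam lam Rg) (hRAt : IsResolvent At lam RAt)
    (hR' : IsResolvent S.Agam.adjoint (starRingEnd ℂ lam) R') :
    (∀ w : H, w ∈ S.WLsub At lam R' →
      ∃! x : H, (x, w) ∈ S.TgraphL At lam Rg R') ∧
    ∀ f : H, (RAt f - Rg f, S.projWL At lam R' f) ∈ S.TgraphL At lam Rg R' := by
  have hAtD : Dense (At.domain : Set H) := S.dense_Amin.mono h1.1
  have hAgD : Dense (S.Agam.domain : Set H) := S.dense_Amin.mono S.Amin_le_Agam.1
  -- Part 2 : the Kreĭn resolvent formula membership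
  have part2 : ∀ f : H, (RAt f - Rg f, S.projWL At lam R' f) ∈ S.TgraphL At lam Rg R' := by
    intro f
    have hmem : RAt f ∈ At.domain := hRAt.mem f
    have umem : RAt f ∈ S.Amax.domain := h2.1 hmem
    have hval : S.Amax ⟨RAt f, umem⟩ = At ⟨RAt f, hmem⟩ := (h2.2 rfl).symm
    have key : S.Amax ⟨RAt f, umem⟩ - lam • (RAt f) = f := by
      rw [hval]; exact hRAt.right f
    refine ⟨⟨RAt f, umem⟩, hmem, ?_, ?_⟩
    · simp only [Setup.uzetaL]; rw [key]
    · rw [key]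
  -- The difference of resolvents kills the orthogonal complement of `W_λ̄`
  have hKer : ∀ h : H, h ∈ (S.WLsub At lam R')ᗮ → RAt h - Rg h = 0 := by
    intro h hh
    have main : ∀ g : H, (inner ℂ g (RAt h - Rg h) : ℂ) = 0 := by
      intro g
      obtain ⟨hvmem, hv⟩ := resolvent_adjoint hAtD hRAt g
      set v := (ContinuousLinearMap.adjoint RAt) g with hvdef
      have hle : At.adjoint ≤ S.Amax' := adjoint_anti S.dense_Amin hAtD h1
      have hvm' : v ∈ S.Amax'.domain := hle.1 hvmem
      have hvv : S.Amax' ⟨v, hvm'⟩ = At.adjoint ⟨v, hvmem⟩ := (hle.2 rfl).symm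
      have hg' : S.Amax' ⟨v, hvm'⟩ - (starRingEnd ℂ lam) • v = g := by
        rw [hvv, hv]; abel
      have hz : S.vzetaL lam R' ⟨v, hvm'⟩ = v - R' g := by
        simp only [Setup.vzetaL]; rw [hg']
      have hzmem : v - R' g ∈ S.WLsub At lam R' := by
        rw [← hz]
        exact Submodule.le_topologicalClosure _
          (Submodule.subset_span ⟨⟨v, hvm'⟩, hvmem, rfl⟩)
      have hgv : g = At.adjoint ⟨v, hvmem⟩ - (starRingEnd ℂ lam) • v := by
        rw [hv]; abel
      have e1 : (inner ℂ g (RAt h) : ℂ) = inner ℂ v h := by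
        have hfa := LinearPMap.adjoint_isFormalAdjoint hAtD ⟨v, hvmem⟩ ⟨RAt h, hRAt.mem h⟩
        have hAth := hRAt.right h
        have rhs : (inner ℂ v h : ℂ)
            = inner ℂ v (At ⟨RAt h, hRAt.mem h⟩) - lam * inner ℂ v (RAt h) := by
          conv_lhs => rw [← hAth]
          rw [inner_sub_right, inner_smul_right]
        rw [hgv, inner_sub_left, hfa, inner_smul_left, rhs]
        simp
      have e2 : (inner ℂ g (Rg h) : ℂ) = inner ℂ (R' g) h := by
        have hfa := LinearPMap.adjoint_isFormalAdjoint hAgD ⟨R' g, hR'.mem g⟩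
          ⟨Rg h, hRg.mem h⟩
        have hgy : g = S.Agam.adjoint ⟨R' g, hR'.mem g⟩ - (starRingEnd ℂ lam) • (R' g) :=
          (hR'.right g).symm
        have hAgh := hRg.right h
        have rhs : (inner ℂ (R' g) h : ℂ)
            = inner ℂ (R' g) (S.Agam ⟨Rg h, hRg.mem h⟩) - lam * inner ℂ (R' g) (Rg h) := by
          conv_lhs => rw [← hAgh]
          rw [inner_sub_right, inner_smul_right]
        conv_lhs => rw [hgy]
        rw [inner_sub_left, hfa, inner_smul_left, rhs]
        simp
      rw [inner_sub_right, e1, e2, ← inner_sub_left]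
      exact (Submodule.mem_orthogonal _ h).mp hh _ hzmem
    have := main (RAt h - Rg h)
    rwa [inner_self_eq_zero] at this
  refine ⟨?_, part2⟩
  intro w hw
  have hpw : S.projWL At lam R' w = w := projCl_apply_mem _ _ hw
  have hcan : (RAt w - Rg w, w) ∈ S.TgraphL At lam Rg R' := by
    have := part2 w; rwa [hpw] at this
  refine ⟨RAt w - Rg w, hcan, ?_⟩
  rintro x ⟨u, huAt, hx, hw2⟩
  obtain ⟨f', hf'⟩ : ∃ f', f' = S.Amax u - lam • (u : H) := ⟨_, rfl⟩
  have hx' : x = S.uzetaL lam Rg u := hx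
  have hw2' : w = S.projWL At lam R' f' := by rw [hf']; exact hw2
  have hAtu : At ⟨(u : H), huAt⟩ = S.Amax u := h2.2 rfl
  have hu : RAt f' = (u : H) := by
    have h' := hRAt.left ⟨(u : H), huAt⟩
    rw [hAtu] at h'
    rw [hf']; exact h'
  have hxval : x = RAt f' - Rg f' := by
    rw [hx']; simp only [Setup.uzetaL]; rw [← hf', hu]
  have hdiff : f' - w ∈ (S.WLsub At lam R')ᗮ := by
    rw [hw2']; exact sub_projCl_mem_orthogonal _ _ f'
  have h0 := hKer _ hdiff
  rw [map_sub RAt, map_sub Rg] at h0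
  have h0' : RAt f' - Rg f' - (RAt w - Rg w) = 0 := by rw [← h0]; abel
  rw [hxval]
  exact sub_eq_zero.mp h0'

end GrubbExt
end
end
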